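/- For any convex function F : ℝⁿ → ℝ, any point x, and any unit vector n, if y minimizes F on the line L = {x + t·n : t ∈ ℝ}, then there exists a subgradient γ of F at y with ⟨γ, y - x⟩ = 0. -/

import Mathlib

open Pointwise

/-- For a convex F : ℝⁿ → ℝ, a point x, a unit vector u, if y minimizes F
over the line {x + t·u : t ∈ ℝ}, then there is a subgradient γ of F at y with
⟨γ, y - x⟩ = 0. -/
theorem stmt9 (n : ℕ) (F : (Fin n → ℝ) → ℝ)
    (hconv : ConvexOn ℝ Set.univ F)
    (x u : Fin n → ℝ) (hu : ∑ i, (u i)^2 = 1)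
    (t₀ : ℝ) (y : Fin n → ℝ) (hy : y = x + t₀ • u)
    (hmin : ∀ t : ℝ, F y ≤ F (x + t • u)) :
    ∃ γ : Fin n → ℝ,
      (∀ z : Fin n → ℝ, F z ≥ F y + ∑ i, γ i * (z i - y i)) ∧
      ∑ i, γ i * (y i - x i) = 0 := by
  classical
  -- convexity in usable form
  have key : ∀ (a b : ℝ) (va vb : Fin n → ℝ), 0 ≤ a → 0 ≤ b → a + b = 1 →
      F (a • va + b • vb) ≤ a * F va + b * F vb := by
    intro a b va vb ha hb hab
    exact hconv.2 (Set.mem_univ va) (Set.mem_univ vb) ha hb hab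
  -- difference quotients
  set q : (Fin n → ℝ) → ℝ → ℝ := fun v s => (F (y + s • v) - F y) / s with hqdef
  -- lower bound for difference quotients
  have lemA : ∀ (v : Fin n → ℝ) (s : ℝ), 0 < s → F y - F (y - v) ≤ q v s := by
    intro v s hs
    have hs1 : (0:ℝ) < s + 1 := by linarith
    have hcomb : (s/(s+1)) • (y - v) + (1/(s+1)) • (y + s • v) = y := by
      funext i
      simp only [Pi.add_apply, Pi.smul_apply, Pi.sub_apply, smul_eq_mul]
      field_simp
      ring
    have h := key (s/(s+1)) (1/(s+1)) (y - v) (y + s • v)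
      (by positivity) (by positivity) (by field_simp)
    rw [hcomb] at h
    have h2 : (s+1) * F y ≤ s * F (y - v) + F (y + s • v) := by
      have h' := mul_le_mul_of_nonneg_left h hs1.le
      calc (s+1) * F y ≤ (s+1) * (s / (s + 1) * F (y - v) + 1 / (s + 1) * F (y + s • v)) := h'
        _ = s * F (y - v) + F (y + s • v) := by field_simp
    rw [hqdef]
    rw [le_div_iff₀ hs]
    nlinarith
  -- the sets of quotients
  set S : (Fin n → ℝ) → Set ℝ := fun v => q v '' Set.Ioi 0 with hSdef
  have hne : ∀ v, (S v).Nonempty := fun v => ⟨q v 1, 1, by norm_num, rfl⟩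
  have hbdd : ∀ v, BddBelow (S v) := by
    intro v
    refine ⟨F y - F (y - v), ?_⟩
    rintro _ ⟨s, hs, rfl⟩
    exact lemA v s hs
  set p : (Fin n → ℝ) → ℝ := fun v => sInf (S v) with hpdef
  have hmem : ∀ v s, 0 < s → p v ≤ q v s := by
    intro v s hs
    exact csInf_le (hbdd v) ⟨s, hs, rfl⟩
  -- subadditivity core
  have core : ∀ (v w : Fin n → ℝ) (s t : ℝ), 0 < s → 0 < t →
      q (v + w) (s * t / (s + t)) ≤ q v s + q w t := by
    intro v w s t hs ht
    have hst : (0:ℝ) < s + t := by linarith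
    have hr : (0:ℝ) < s * t / (s + t) := by positivity
    have hcomb : (t/(s+t)) • (y + s • v) + (s/(s+t)) • (y + t • w)
        = y + (s * t / (s + t)) • (v + w) := by
      funext i
      simp only [Pi.add_apply, Pi.smul_apply, smul_eq_mul]
      field_simp
      ring
    have h := key (t/(s+t)) (s/(s+t)) (y + s • v) (y + t • w)
      (by positivity) (by positivity) (by field_simp; ring)
    rw [hcomb] at h
    rw [hqdef]
    simp only
    rw [div_add_div _ _ (ne_of_gt hs) (ne_of_gt ht),
      div_le_div_iff₀ hr (by positivity : (0:ℝ) < s * t), ← mul_div_assoc, le_div_iff₀ hst]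
    have h3 : (s + t) * F (y + (s * t / (s + t)) • (v + w))
        ≤ t * F (y + s • v) + s * F (y + t • w) := by
      have h2 := mul_le_mul_of_nonneg_left h hst.le
      calc (s + t) * F (y + (s * t / (s + t)) • (v + w))
          ≤ (s+t) * (t / (s + t) * F (y + s • v) + s / (s + t) * F (y + t • w)) := h2
        _ = t * F (y + s • v) + s * F (y + t • w) := by field_simp
    nlinarith [mul_le_mul_of_nonneg_left h3 (mul_pos hs ht).le]
  -- subadditivity of p
  have padd : ∀ v w, p (v + w) ≤ p v + p w := by
    intro v w
    refine le_of_forall_pos_le_add ?_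
    intro ε hε
    obtain ⟨a, ⟨s, hs, rfl⟩, has⟩ := exists_lt_of_csInf_lt (hne v)
      (show p v < p v + ε/2 by linarith)
    obtain ⟨b, ⟨t, ht, rfl⟩, hbt⟩ := exists_lt_of_csInf_lt (hne w)
      (show p w < p w + ε/2 by linarith)
    have hs' : (0:ℝ) < s := hs
    have ht' : (0:ℝ) < t := ht
    have h1 : p (v + w) ≤ q (v + w) (s * t / (s + t)) :=
      hmem _ _ (by positivity)
    have h2 := core v w s t hs ht
    linarith
  -- positive homogeneity of p
  have phom : ∀ (c : ℝ), 0 < c → ∀ v, p (c • v) = c * p v := by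
    intro c hc v
    have hc0 : c ≠ 0 := hc.ne'
    have hset : S (c • v) = c • (S v) := by
      ext a
      constructor
      · rintro ⟨s, hs, rfl⟩
        have hs' : (0:ℝ) < s := hs
        refine ⟨q v (s * c), ⟨s * c, Set.mem_Ioi.mpr (by positivity), rfl⟩, ?_⟩
        show c • ((F (y + (s * c) • v) - F y) / (s * c)) = (F (y + s • c • v) - F y) / s
        rw [smul_smul, smul_eq_mul]
        field_simp
      · rintro ⟨a, ⟨t, ht, rfl⟩, rfl⟩
        have ht' : (0:ℝ) < t := ht
        refine ⟨t / c, Set.mem_Ioi.mpr (by positivity), ?_⟩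
        show (F (y + (t / c) • c • v) - F y) / (t / c) = c • ((F (y + t • v) - F y) / t)
        rw [smul_smul, div_mul_cancel₀ _ hc0, smul_eq_mul, div_div_eq_mul_div]
        ring
    rw [hpdef]
    simp only
    rw [hset, Real.sInf_smul_of_nonneg hc.le]
    rfl
  -- the partial linear map: zero on the span of u
  set f : (Fin n → ℝ) →ₗ.[ℝ] ℝ := ⟨Submodule.span ℝ {u}, 0⟩ with hfdef
  have hspan_nonneg : ∀ c : ℝ, 0 ≤ p (c • u) := by
    intro c
    refine le_csInf (hne _) ?_
    rintro _ ⟨s, hs, rfl⟩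
    rw [hqdef]
    have : y + s • c • u = x + (t₀ + s * c) • u := by
      rw [hy]; funext i
      simp only [Pi.add_apply, Pi.smul_apply, smul_eq_mul]
      ring
    simp only [this]
    have := hmin (t₀ + s * c)
    rw [hy] at this
    apply div_nonneg _ hs.le
    linarith [hmin (t₀ + s * c)]
  have hf : ∀ z : f.domain, f z ≤ p z := by
    rintro ⟨z, hz⟩
    obtain ⟨c, rfl⟩ := Submodule.mem_span_singleton.mp hz
    have : f ⟨c • u, hz⟩ = 0 := rfl
    rw [this]
    exact hspan_nonneg c
  obtain ⟨g, hg_ext, hg_le⟩ := exists_extension_of_le_sublinear f p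
    (fun c hc v => phom c hc v) padd hf
  have hgu : g u = 0 := by
    have hu_mem : u ∈ Submodule.span ℝ {u} := Submodule.mem_span_singleton_self u
    have := hg_ext ⟨u, hu_mem⟩
    exact this.trans rfl
  -- the subgradient property of g
  have hsub : ∀ z : Fin n → ℝ, g (z - y) ≤ F z - F y := by
    intro z
    have h1 : p (z - y) ≤ q (z - y) 1 := hmem _ 1 one_pos
    have h2 : q (z - y) 1 = F z - F y := by
      rw [hqdef]
      simp
    calc g (z - y) ≤ p (z - y) := hg_le _
      _ ≤ F z - F y := by rw [← h2]; exact h1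
  -- turn g into coordinates
  refine ⟨fun i => g (Pi.single i 1), ?_, ?_⟩
  · intro z
    have hgsum : g (z - y) = ∑ i, (z i - y i) * g (Pi.single i 1) := by
      conv_lhs => rw [pi_eq_sum_univ (z - y)]
      rw [map_sum]
      refine Finset.sum_congr rfl fun i _ => ?_
      rw [map_smul]
      simp only [Pi.sub_apply, smul_eq_mul]
      congr 1
      congr 1
      funext j
      simp [Pi.single_apply, eq_comm]
    have := hsub z
    rw [hgsum] at this
    have heq : ∑ i, g (Pi.single i 1) * (z i - y i) = ∑ i, (z i - y i) * g (Pi.single i 1) :=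
      Finset.sum_congr rfl fun i _ => mul_comm _ _
    rw [ge_iff_le, heq]
    linarith
  · have hyx : y - x = t₀ • u := by rw [hy]; funext i; simp
    have hgsum : g (y - x) = ∑ i, (y i - x i) * g (Pi.single i 1) := by
      conv_lhs => rw [pi_eq_sum_univ (y - x)]
      rw [map_sum]
      refine Finset.sum_congr rfl fun i _ => ?_
      rw [map_smul]
      simp only [Pi.sub_apply, smul_eq_mul]
      congr 1
      congr 1
      funext j
      simp [Pi.single_apply, eq_comm]
    have h0 : g (y - x) = 0 := by
      rw [hyx, map_smul, hgu]
      simp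
    rw [h0] at hgsum
    calc ∑ i, g (Pi.single i 1) * (y i - x i)
        = ∑ i, (y i - x i) * g (Pi.single i 1) :=
          Finset.sum_congr rfl fun i _ => mul_comm _ _
      _ = 0 := hgsum.symm
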